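/- Let m = {Δ_1, ..., Δ_{2m}} be a ladder of segments of integers with Δ_{2i−1} = νΔ_{2i} for all i = 1, ..., m, and write Δ_i = [a_i, b_i]. For 1 ≤ i ≤ 2m−1 such that a_i ≤ b_{i+1} + 1, let m_i be the multi-set obtained from m by replacing the pair {Δ_i, Δ_{i+1}} with {[a_{i+1}, b_i], [a_i, b_{i+1}]} (where [a,a−1] denotes the empty segment, omitted from the multi-set). Then m_i is not of Speh type for any i = 1, ..., 2m−1. -/

import Mathlib

/-- A segment of integers `[a,b] = {a, a+1, ..., b}` with `a ≤ b`. -/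
structure Seg where
  a : ℤ
  b : ℤ
  le : a ≤ b

noncomputable instance : DecidableEq Seg := Classical.decEq _

/-- The shift `ν[a,b] = [a+1,b+1]`. -/
def Seg.nu (Δ : Seg) : Seg := ⟨Δ.a + 1, Δ.b + 1, by have := Δ.le; omega⟩

/-- `Δ ≺ Δ'` : `Δ` precedes `Δ'`. -/
def Seg.prec (Δ Δ' : Seg) : Prop := Δ.a < Δ'.a ∧ Δ.b < Δ'.b ∧ Δ'.a - 1 ≤ Δ.b

/-- A multi-set of segments is of Speh type if `m = n + νn` for some multi-set `n`. -/
def SpehType (m : Multiset Seg) : Prop := ∃ n : Multiset Seg, m = n + n.map Seg.nu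

/-- A list of segments is a ladder if beginnings and ends are strictly decreasing. -/
def IsLadder (L : List Seg) : Prop :=
  List.Chain' (fun Δ Δ' : Seg => Δ'.a < Δ.a ∧ Δ'.b < Δ.b) L

/-- The multi-set `{[x,y]}` if `x ≤ y`, empty otherwise (empty segments are omitted). -/
def segMk (x y : ℤ) : Multiset Seg := if h : x ≤ y then {⟨x, y, h⟩} else 0

/-- let `m = {Δ_1,...,Δ_{2m}}` be a ladder with `Δ_{2i−1} = νΔ_{2i}` (i.e. of
Speh type), `Δ_i = [a_i,b_i]`. For `i` with `a_i ≤ b_{i+1} + 1` (0-indexed below), the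
multi-set `m_i` obtained by replacing `{Δ_i, Δ_{i+1}}` with `{[a_{i+1},b_i], [a_i,b_{i+1}]}`
(empty segments omitted) is not of Speh type. -/
lemma speh_even (c : ℤ) (m : Multiset Seg) (h : SpehType m) :
    Even (Multiset.countP (fun Δ => Δ.b - Δ.a = c) m) := by
  obtain ⟨n, rfl⟩ := h
  rw [Multiset.countP_add, Multiset.countP_map]
  have : (Multiset.filter (fun a => (fun Δ => Δ.b - Δ.a = c) (Seg.nu a)) n).card
      = Multiset.countP (fun Δ => Δ.b - Δ.a = c) n := by
    rw [Multiset.countP_eq_card_filter]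
    congr 1
    apply Multiset.filter_congr
    intro Δ _
    simp [Seg.nu]
  rw [this]
  exact ⟨_, rfl⟩

lemma even_countP_paired (c : ℤ) (mm : ℕ) :
    ∀ (L : List Seg), L.length = 2 * mm →
    (∀ (j : ℕ) (h : 2 * j + 1 < L.length),
      L.get ⟨2 * j, by omega⟩ = (L.get ⟨2 * j + 1, h⟩).nu) →
    Even (Multiset.countP (fun Δ => Δ.b - Δ.a = c) (↑L : Multiset Seg)) := by
  induction mm with
  | zero =>
    intro L hlen _
    have : L = [] := List.length_eq_zero_iff.mp (by omega)
    subst this; simp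
  | succ m ih =>
    intro L hlen hpair
    match L, hlen with
    | x :: y :: L', hlen =>
      have hxy : x = y.nu := by
        have := hpair 0 (by simp)
        simpa using this
      have hL' : L'.length = 2 * m := by simp at hlen; omega
      have hpair' : ∀ (j : ℕ) (h : 2 * j + 1 < L'.length),
          L'.get ⟨2 * j, by omega⟩ = (L'.get ⟨2 * j + 1, h⟩).nu := by
        intro j h
        have h2 : 2 * (j + 1) + 1 < (x :: y :: L').length := by simp; omega
        have := hpair (j + 1) h2
        have e1 : 2 * (j + 1) = 2 * j + 1 + 1 := by ring
        simp only [List.get_eq_getElem, e1, List.getElem_cons_succ] at this ⊢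
        exact this
      obtain ⟨k, hk⟩ := ih L' hL' hpair'
      have hco : (↑(x :: y :: L') : Multiset Seg) = x ::ₘ y ::ₘ ↑L' := rfl
      rw [hco, Multiset.countP_cons, Multiset.countP_cons]
      subst hxy
      have hiff : (y.nu.b - y.nu.a = c) ↔ (y.b - y.a = c) := by simp [Seg.nu]
      by_cases hy : y.b - y.a = c
      · simp only [hy, hiff.mpr hy, if_true, hk]
        exact ⟨k + 1, by ring⟩
      · rw [if_neg (fun h => hy (hiff.mp h)), if_neg hy, hk]
        exact ⟨k, by ring⟩

theorem elementary_operation_not_speh (L : List Seg) (hL : IsLadder L)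
    (mm : ℕ) (hlen : L.length = 2 * mm)
    (hpair : ∀ (j : ℕ) (h : 2 * j + 1 < L.length),
      L.get ⟨2 * j, by omega⟩ = (L.get ⟨2 * j + 1, h⟩).nu)
    (i : ℕ) (hi : i + 1 < L.length)
    (hlink : (L.get ⟨i, by omega⟩).a ≤ (L.get ⟨i + 1, hi⟩).b + 1) :
    ¬ SpehType ((↑L : Multiset Seg)
        - {L.get ⟨i, by omega⟩, L.get ⟨i + 1, hi⟩}
        + segMk (L.get ⟨i + 1, hi⟩).a (L.get ⟨i, by omega⟩).b
        + segMk (L.get ⟨i, by omega⟩).a (L.get ⟨i + 1, hi⟩).b) := by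
  intro hs
  have hii : i < L.length := by omega
  set Δ : Seg := L.get ⟨i, hii⟩ with hΔ
  set Δ' : Seg := L.get ⟨i + 1, hi⟩ with hΔ'
  set p : Seg → Prop := fun s => s.b - s.a = Δ.b - Δ'.a with hp
  -- ladder relation between consecutive entries
  have hrel : Δ'.a < Δ.a ∧ Δ'.b < Δ.b := by
    have := List.isChain_iff_getElem.mp hL i (by omega)
    exact this
  have hle : ({Δ, Δ'} : Multiset Seg) ≤ (↑L : Multiset Seg) := by
    rw [Multiset.le_iff_count]
    intro z
    have h1 : Δ ∈ L := List.get_mem L ⟨i, hii⟩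
    have h2 : Δ' ∈ L := List.get_mem L ⟨i + 1, hi⟩
    have hne : Δ ≠ Δ' := by
      intro h; rw [h] at hrel; omega
    by_cases hz1 : z = Δ
    · subst hz1
      have hcz : Multiset.count Δ ({Δ, Δ'} : Multiset Seg) = 1 := by
        simp [Multiset.count_cons, hne]
      rw [hcz, Multiset.one_le_count_iff_mem, Multiset.mem_coe]
      exact h1
    · by_cases hz2 : z = Δ'
      · subst hz2
        have hcz : Multiset.count Δ' ({Δ, Δ'} : Multiset Seg) = 1 := by
          simp [Multiset.count_cons, Ne.symm hne]
        rw [hcz, Multiset.one_le_count_iff_mem, Multiset.mem_coe]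
        exact h2
      · have hcz : Multiset.count z ({Δ, Δ'} : Multiset Seg) = 0 := by
          simp [Multiset.count_cons, hz1, hz2]
        rw [hcz]; omega
  have hEvenM : Even (Multiset.countP p ((↑L : Multiset Seg)
      - {Δ, Δ'} + segMk Δ'.a Δ.b + segMk Δ.a Δ'.b)) := speh_even _ _ hs
  have hEvenL : Even (Multiset.countP p (↑L : Multiset Seg)) :=
    even_countP_paired _ mm L hlen hpair
  have hc0 : Multiset.countP p ({Δ, Δ'} : Multiset Seg) = 0 := by
    have hpΔ : ¬ p Δ := by simp only [hp]; omega
    have hpΔ' : ¬ p Δ' := by simp only [hp]; omega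
    have : ({Δ, Δ'} : Multiset Seg) = Δ ::ₘ Δ' ::ₘ 0 := rfl
    rw [this, Multiset.countP_cons, Multiset.countP_cons, Multiset.countP_zero,
      if_neg hpΔ, if_neg hpΔ']
  have hdiff : Multiset.countP p ((↑L : Multiset Seg) - {Δ, Δ'})
      = Multiset.countP p (↑L : Multiset Seg) := by
    have hsplit : (↑L : Multiset Seg) = ((↑L : Multiset Seg) - {Δ, Δ'}) + {Δ, Δ'} :=
      (tsub_add_cancel_of_le hle).symm
    conv_rhs => rw [hsplit]
    rw [Multiset.countP_add, hc0]
    omega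
  have hc1 : Multiset.countP p (segMk Δ'.a Δ.b) = 1 := by
    have hab : Δ'.a ≤ Δ.b := le_trans (le_of_lt hrel.1) Δ.le
    rw [segMk, dif_pos hab]
    have : ({(⟨Δ'.a, Δ.b, hab⟩ : Seg)} : Multiset Seg) = (⟨Δ'.a, Δ.b, hab⟩ : Seg) ::ₘ 0 := rfl
    rw [this, Multiset.countP_cons, Multiset.countP_zero, if_pos]
    simp only [hp]
  have hc2 : Multiset.countP p (segMk Δ.a Δ'.b) = 0 := by
    rw [segMk]
    split
    · have : ∀ h : Δ.a ≤ Δ'.b, ({(⟨Δ.a, Δ'.b, h⟩ : Seg)} : Multiset Seg)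
          = (⟨Δ.a, Δ'.b, h⟩ : Seg) ::ₘ 0 := fun _ => rfl
      rw [this, Multiset.countP_cons, Multiset.countP_zero, if_neg]
      simp only [hp]
      omega
    · simp
  rw [Multiset.countP_add, Multiset.countP_add, hdiff, hc1, hc2] at hEvenM
  obtain ⟨u, hu⟩ := hEvenM
  obtain ⟨v, hv⟩ := hEvenL
  omega
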